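/- For every approval election (C, N, 𝓕) with nonempty downward-closed feasibility family, there exists a feasible outcome W ∈ 𝓕 satisfying extended justified representation (EJR): for each ℓ ∈ ℕ and each group S ⊆ N that deserves ℓ candidates, some voter i ∈ S approves at least ℓ candidates in W. -/

import Mathlib

/-- A group `S` deserves `ℓ` candidates. -/
def Deserves {C N : Type*} [DecidableEq C] [Fintype N] (F : Set (Finset C))
    (A : N → Finset C) (S : Finset N) (ℓ : ℕ) : Prop :=
  ∀ T ∈ F, (∃ X : Finset C, (∀ i ∈ S, X ⊆ A i) ∧ ℓ ≤ X.card ∧ T ∪ X ∈ F) ∨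
    (S.card : ℝ) / (Fintype.card N : ℝ) > (ℓ : ℝ) / ((T.card : ℝ) + (ℓ : ℝ))

open Finset in
/-- Serving a pairwise-disjoint family of deserving pairs, in order of
increasing ratio `ℓ/|S|`. -/
lemma serve_aux {C N : Type*} [DecidableEq C] [Fintype C] [Fintype N]
    (F : Set (Finset C)) (A : N → Finset C)
    (hdc : ∀ X ∈ F, ∀ Y : Finset C, Y ⊆ X → Y ∈ F) (hF0 : (∅ : Finset C) ∈ F) :
    ∀ (k : ℕ) (P : Finset (Finset N × ℕ)), P.card ≤ k →
      (∀ p ∈ P, p.1.Nonempty ∧ 1 ≤ p.2 ∧ Deserves F A p.1 p.2) →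
      (∀ p ∈ P, ∀ q ∈ P, p ≠ q → Disjoint p.1 q.1) →
      ∃ W ∈ F, W.card ≤ ∑ p ∈ P, p.2 ∧ ∀ p ∈ P, ∀ i ∈ p.1, p.2 ≤ (A i ∩ W).card := by
  classical
  intro k
  induction k with
  | zero =>
    intro P hPcard _ _
    have hP : P = ∅ := card_eq_zero.mp (Nat.le_zero.mp hPcard)
    subst hP
    exact ⟨∅, hF0, by simp, by simp⟩
  | succ k ih =>
    intro P hPcard hgood hdisj
    rcases P.eq_empty_or_nonempty with rfl | hPne
    · exact ⟨∅, hF0, by simp, by simp⟩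
    obtain ⟨p, hpP, hpmax⟩ := P.exists_max_image (fun q => (q.2 : ℚ) / (q.1.card : ℚ)) hPne
    obtain ⟨W', hW'F, hW'card, hW'serve⟩ := ih (P.erase p)
      (by have := card_erase_of_mem hpP; omega)
      (fun q hq => hgood q (mem_of_mem_erase hq))
      (fun q hq r hr hqr => hdisj q (mem_of_mem_erase hq) r (mem_of_mem_erase hr) hqr)
    obtain ⟨hpne, hpl, hpdes⟩ := hgood p hpP
    have hspos : 0 < p.1.card := card_pos.mpr hpne
    have hnpos : 0 < Fintype.card N := Fintype.card_pos_iff.mpr ⟨hpne.choose⟩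
    -- cross-multiplied maximality
    have hcross : ∀ q ∈ P.erase p, q.2 * p.1.card ≤ p.2 * q.1.card := by
      intro q hq
      have hqne := (hgood q (mem_of_mem_erase hq)).1
      have hq0 : (0 : ℚ) < (q.1.card : ℚ) := by exact_mod_cast card_pos.mpr hqne
      have hp0 : (0 : ℚ) < (p.1.card : ℚ) := by exact_mod_cast hspos
      have h := hpmax q (mem_of_mem_erase hq)
      rw [div_le_div_iff₀ hq0 hp0] at h
      exact_mod_cast h
    have hsum1 : p.1.card * (∑ q ∈ P.erase p, q.2) ≤ p.2 * ∑ q ∈ P.erase p, q.1.card := by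
      rw [Finset.mul_sum, Finset.mul_sum]
      refine Finset.sum_le_sum fun q hq => ?_
      rw [mul_comm]
      exact hcross q hq
    have hsum2 : ∑ q ∈ P, q.1.card ≤ Fintype.card N := by
      rw [← Finset.card_biUnion hdisj]
      exact card_le_univ _
    have hsum3 : p.1.card + ∑ q ∈ P.erase p, q.1.card = ∑ q ∈ P, q.1.card :=
      Finset.add_sum_erase P (fun q => q.1.card) hpP
    have h2 : (∑ q ∈ P.erase p, q.1.card) + p.1.card ≤ Fintype.card N := by omega
    have h1 : p.1.card * W'.card ≤ p.2 * ∑ q ∈ P.erase p, q.1.card :=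
      le_trans (mul_le_mul_right hW'card _) hsum1
    have hkey : p.1.card * (W'.card + p.2) ≤ Fintype.card N * p.2 := by
      calc p.1.card * (W'.card + p.2)
          = p.1.card * W'.card + p.1.card * p.2 := by ring
        _ ≤ (p.2 * ∑ q ∈ P.erase p, q.1.card) + p.2 * p.1.card :=
            Nat.add_le_add h1 (le_of_eq (mul_comm _ _))
        _ = p.2 * ((∑ q ∈ P.erase p, q.1.card) + p.1.card) := by ring
        _ ≤ p.2 * Fintype.card N := mul_le_mul_right h2 _
        _ = Fintype.card N * p.2 := mul_comm _ _
    rcases hpdes W' hW'F with ⟨X, hXA, hXcard, hXF⟩ | hbig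
    · obtain ⟨X', hX'X, hX'card⟩ := Finset.exists_subset_card_eq hXcard
      refine ⟨W' ∪ X', hdc _ hXF _ (union_subset_union_right hX'X), ?_, ?_⟩
      · calc (W' ∪ X').card ≤ W'.card + X'.card := card_union_le _ _
          _ ≤ (∑ q ∈ P.erase p, q.2) + p.2 := by rw [hX'card]; omega
          _ = ∑ q ∈ P, q.2 := Finset.sum_erase_add _ _ hpP
      · intro q hq i hi
        by_cases hqp : q = p
        · subst hqp
          have hsub : X' ⊆ A i ∩ (W' ∪ X') :=
            subset_inter (hX'X.trans (hXA i hi)) subset_union_right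
          calc q.2 = X'.card := hX'card.symm
            _ ≤ _ := card_le_card hsub
        · have hq' : q ∈ P.erase p := mem_erase.mpr ⟨hqp, hq⟩
          exact le_trans (hW'serve q hq' i hi)
            (card_le_card (inter_subset_inter (Finset.Subset.refl _) subset_union_left))
    · exfalso
      have hl0 : (0 : ℝ) < (p.2 : ℝ) := by exact_mod_cast hpl
      have hposd : (0 : ℝ) < (W'.card : ℝ) + (p.2 : ℝ) := by positivity
      have hposn : (0 : ℝ) < (Fintype.card N : ℝ) := by exact_mod_cast hnpos
      rw [gt_iff_lt, div_lt_div_iff₀ hposd hposn] at hbig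
      have hc : (p.1.card : ℝ) * ((W'.card : ℝ) + (p.2 : ℝ)) ≤ (Fintype.card N : ℝ) * p.2 := by
        exact_mod_cast hkey
      nlinarith

/-- For every approval election with a nonempty downward-closed feasibility family,
there exists a feasible outcome satisfying EJR. -/
theorem stmt11 {C N : Type*} [DecidableEq C] [Fintype C] [Fintype N]
    (F : Set (Finset C)) (A : N → Finset C)
    (hne : F.Nonempty) (hdc : ∀ X ∈ F, ∀ Y : Finset C, Y ⊆ X → Y ∈ F) :
    ∃ W ∈ F, ∀ ℓ : ℕ, ∀ S : Finset N, S.Nonempty → Deserves F A S ℓ →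
      ∃ i ∈ S, ℓ ≤ (A i ∩ W).card := by
  classical
  obtain ⟨T0, hT0⟩ := hne
  have hF0 : (∅ : Finset C) ∈ F := hdc T0 hT0 ∅ (Finset.empty_subset _)
  set n := Fintype.card N with hn
  set D : Finset (Finset N × ℕ) :=
    (Finset.univ ×ˢ Finset.range (Fintype.card C + 1)).filter
      (fun p => p.1.Nonempty ∧ 1 ≤ p.2 ∧ Deserves F A p.1 p.2) with hD
  set 𝒜 : Finset (Finset (Finset N × ℕ)) :=
    D.powerset.filter (fun P => ∀ p ∈ P, ∀ q ∈ P, p ≠ q → Disjoint p.1 q.1) with h𝒜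
  have h𝒜ne : 𝒜.Nonempty :=
    ⟨∅, Finset.mem_filter.mpr ⟨Finset.empty_mem_powerset _, by simp⟩⟩
  obtain ⟨P, hP𝒜, hPmax⟩ := 𝒜.exists_max_image (fun Q => ∑ p ∈ Q, (n + 1) ^ p.2) h𝒜ne
  have hPD : P ⊆ D := Finset.mem_powerset.mp (Finset.mem_filter.mp hP𝒜).1
  have hPdisj : ∀ p ∈ P, ∀ q ∈ P, p ≠ q → Disjoint p.1 q.1 :=
    (Finset.mem_filter.mp hP𝒜).2
  have hPgood : ∀ p ∈ P, p.1.Nonempty ∧ 1 ≤ p.2 ∧ Deserves F A p.1 p.2 := by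
    intro p hp
    exact (Finset.mem_filter.mp (hPD hp)).2
  obtain ⟨W, hWF, _, hWserve⟩ := serve_aux F A hdc hF0 P.card P le_rfl hPgood hPdisj
  refine ⟨W, hWF, ?_⟩
  intro ℓ S hS hdes
  rcases Nat.eq_zero_or_pos ℓ with rfl | hl
  · exact ⟨hS.choose, hS.choose_spec, Nat.zero_le _⟩
  have hn0 : 0 < n := Fintype.card_pos_iff.mpr ⟨hS.choose⟩
  -- `ℓ` is at most the number of candidates
  have hlC : ℓ ≤ Fintype.card C := by
    rcases hdes ∅ hF0 with ⟨X, _, hXc, _⟩ | hbig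
    · exact hXc.trans (Finset.card_le_univ X)
    · exfalso
      have hl0 : (0 : ℝ) < (ℓ : ℝ) := by exact_mod_cast hl
      have hSn : (S.card : ℝ) / (n : ℝ) ≤ 1 := by
        rw [div_le_one (by exact_mod_cast hn0)]
        exact_mod_cast Finset.card_le_univ S
      simp only [Finset.card_empty, Nat.cast_zero, zero_add] at hbig
      rw [div_self (ne_of_gt hl0)] at hbig
      rw [hn] at hSn
      linarith
  have hSD : (S, ℓ) ∈ D := by
    rw [hD]
    exact Finset.mem_filter.mpr
      ⟨Finset.mem_product.mpr ⟨Finset.mem_univ _, Finset.mem_range.mpr (by omega)⟩,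
        hS, hl, hdes⟩
  by_cases hcov : ∃ p ∈ P, ℓ ≤ p.2 ∧ ∃ i ∈ S, i ∈ p.1
  · obtain ⟨p, hp, hlp, i, hiS, hip⟩ := hcov
    exact ⟨i, hiS, hlp.trans (hWserve p hp i hip)⟩
  · exfalso
    push_neg at hcov
    have hdP : (S, ℓ) ∉ P := fun h => hcov _ h le_rfl hS.choose hS.choose_spec hS.choose_spec
    set R := P.filter (fun q => ¬ Disjoint q.1 S) with hR
    have hRP : R ⊆ P := Finset.filter_subset _ _
    have hRlt : ∀ q ∈ R, q.2 < ℓ := by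
      intro q hq
      by_contra h
      push_neg at h
      obtain ⟨i, hiq, hiS⟩ := Finset.not_disjoint_iff.mp (Finset.mem_filter.mp hq).2
      exact hcov q (hRP hq) h i hiS hiq
    have hRcard : R.card ≤ n := by
      have h1 : R.card ≤ ∑ q ∈ R, q.1.card := by
        calc R.card = ∑ _q ∈ R, 1 := (Finset.card_eq_sum_ones R)
          _ ≤ _ := Finset.sum_le_sum fun q hq => Finset.card_pos.mpr (hPgood q (hRP hq)).1
      have h2 : ∑ q ∈ R, q.1.card ≤ n := by
        rw [← Finset.card_biUnion
          (fun x hx y hy hxy => hPdisj x (hRP hx) y (hRP hy) hxy)]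
        exact Finset.card_le_univ _
      omega
    set P2 := insert (S, ℓ) (P \ R) with hP2
    have hP2𝒜 : P2 ∈ 𝒜 := by
      rw [h𝒜]
      refine Finset.mem_filter.mpr ⟨Finset.mem_powerset.mpr ?_, ?_⟩
      · exact Finset.insert_subset hSD (Finset.sdiff_subset.trans hPD)
      · intro a ha b hb hab
        rcases Finset.mem_insert.mp ha with rfl | ha' <;>
          rcases Finset.mem_insert.mp hb with rfl | hb'
        · exact absurd rfl hab
        · have hbR : b ∉ R := (Finset.mem_sdiff.mp hb').2
          have hd : Disjoint b.1 S := by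
            by_contra h
            exact hbR (Finset.mem_filter.mpr ⟨(Finset.mem_sdiff.mp hb').1, h⟩)
          exact hd.symm
        · have haR : a ∉ R := (Finset.mem_sdiff.mp ha').2
          by_contra h
          exact haR (Finset.mem_filter.mpr ⟨(Finset.mem_sdiff.mp ha').1, h⟩)
        · exact hPdisj a (Finset.mem_sdiff.mp ha').1 b (Finset.mem_sdiff.mp hb').1 hab
    have hd2 : (S, ℓ) ∉ P \ R := fun h => hdP (Finset.mem_sdiff.mp h).1
    have hepos : 0 < (n + 1) ^ (ℓ - 1) := Nat.pow_pos (by omega)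
    have hΦR : ∑ q ∈ R, (n + 1) ^ q.2 < (n + 1) ^ ℓ := by
      have hb1 : ∑ q ∈ R, (n + 1) ^ q.2 ≤ ∑ _q ∈ R, (n + 1) ^ (ℓ - 1) :=
        Finset.sum_le_sum fun q hq =>
          Nat.pow_le_pow_right (by omega) (by have := hRlt q hq; omega)
      have hb2 : ∑ _q ∈ R, (n + 1) ^ (ℓ - 1) = R.card * (n + 1) ^ (ℓ - 1) := by
        rw [Finset.sum_const, smul_eq_mul]
      have hb3 : R.card * (n + 1) ^ (ℓ - 1) ≤ n * (n + 1) ^ (ℓ - 1) :=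
        Nat.mul_le_mul_right _ hRcard
      have hb5 : (n + 1) ^ ℓ = (n + 1) ^ (ℓ - 1) * (n + 1) := by
        rw [← pow_succ]
        congr 1
        omega
      nlinarith
    have hsplit : (∑ q ∈ P \ R, (n + 1) ^ q.2) + ∑ q ∈ R, (n + 1) ^ q.2
        = ∑ q ∈ P, (n + 1) ^ q.2 := Finset.sum_sdiff hRP
    have hlt : ∑ q ∈ P, (n + 1) ^ q.2 < ∑ q ∈ P2, (n + 1) ^ q.2 := by
      rw [hP2, Finset.sum_insert hd2,
        show ((S, ℓ) : Finset N × ℕ).2 = ℓ from rfl]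
      omega
    exact absurd (hPmax P2 hP2𝒜) (not_le.mpr hlt)
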